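/- arXiv:1707.01560 — 3 statements merged into one kernel-verified Lean document; each statement's English description precedes it below -/
import Mathlib

section
/- Let δ₁, δ₂ be symmetric positive semidefinite real m×m matrices such that I + δ₁δ₂ is invertible. Then the matrix δ₂(I + δ₁δ₂)⁻¹ is symmetric and positive semidefinite. -/
open Matrix

/-- If `δ₁`, `δ₂` are symmetric positive semidefinite real `m × m` matrices
such that `I + δ₁δ₂` is invertible, then `δ₂(I + δ₁δ₂)⁻¹` is symmetric and
positive semidefinite. -/
theorem stmt_2 (m : ℕ) (δ₁ δ₂ : Matrix (Fin m) (Fin m) ℝ)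
    (hδ₁ : δ₁.PosSemidef) (hδ₂ : δ₂.PosSemidef)
    (h : IsUnit (1 + δ₁ * δ₂)) :
    (δ₂ * (1 + δ₁ * δ₂)⁻¹).PosSemidef := by
  set M := 1 + δ₁ * δ₂ with hMdef
  have hdet : IsUnit M.det := (isUnit_iff_isUnit_det M).mp h
  have hinv : M * M⁻¹ = 1 := mul_nonsing_inv M hdet
  have h1 : δ₁ᴴ = δ₁ := hδ₁.1
  have h2 : δ₂ᴴ = δ₂ := hδ₂.1
  have hMt : Mᴴ * δ₂ = δ₂ + δ₂ * δ₁ * δ₂ := by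
    rw [hMdef, conjTranspose_add, conjTranspose_one, conjTranspose_mul,
      h1, h2, add_mul, one_mul]
  have hkey : δ₂ * M⁻¹ = (M⁻¹)ᴴ * (δ₂ + δ₂ * δ₁ * δ₂) * M⁻¹ := by
    rw [← hMt, ← Matrix.mul_assoc, ← conjTranspose_mul, hinv,
      conjTranspose_one, Matrix.one_mul]
  rw [hkey]
  have hmid : (δ₂ + δ₂ * δ₁ * δ₂).PosSemidef := by
    have : (δ₂ᴴ * δ₁ * δ₂).PosSemidef := hδ₁.conjTranspose_mul_mul_same δ₂
    rw [hδ₂.1] at this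
    exact hδ₂.add this
  exact hmid.conjTranspose_mul_mul_same M⁻¹
end

section
/- Let R₁, R₂ be symmetric positive semidefinite real n×n matrices, g₁, g₂ real n×m matrices, and δ₁, δ₂ symmetric positive semidefinite real m×m matrices such that I + δ₁δ₂ and I + δ₂δ₁ are invertible. Then the (2n)×(2n) block-diagonal matrix R̃ with diagonal blocks R₁ + g₁ δ₂(I + δ₁δ₂)⁻¹ g₁ᵀ and R₂ + g₂ δ₁(I + δ₂δ₁)⁻¹ g₂ᵀ (and zero off-diagonal blocks) is symmetric and positive semidefinite. -/
open Matrix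

lemma aux_comm {m : ℕ} (A B : Matrix (Fin m) (Fin m) ℝ)
    (h : IsUnit (1 + A * B)) (h' : IsUnit (1 + B * A)) :
    B * (1 + A * B)⁻¹ = (1 + B * A)⁻¹ * B := by
  have key : (1 + B * A) * (B * (1 + A * B)⁻¹) = B := by
    have : (1 + B * A) * B = B * (1 + A * B) := by
      simp [add_mul, mul_add, mul_assoc]
    rw [← mul_assoc, this, mul_assoc, Matrix.mul_nonsing_inv _ (h.map (Matrix.detMonoidHom)),
      mul_one]
  calc B * (1 + A * B)⁻¹
      = (1 + B * A)⁻¹ * ((1 + B * A) * (B * (1 + A * B)⁻¹)) := by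
        rw [← mul_assoc, Matrix.nonsing_inv_mul _ (h'.map (Matrix.detMonoidHom)), one_mul]
    _ = (1 + B * A)⁻¹ * B := by rw [key]

lemma aux_psd {m : ℕ} (A B : Matrix (Fin m) (Fin m) ℝ)
    (hA : A.PosSemidef) (hB : B.PosSemidef)
    (h : IsUnit (1 + A * B)) (h' : IsUnit (1 + B * A)) :
    (B * (1 + A * B)⁻¹).PosSemidef := by
  have hAB : IsUnit (1 + A * B).det := h.map Matrix.detMonoidHom
  rw [posSemidef_iff_dotProduct_mulVec] at hA hB ⊢
  constructor
  · -- Hermitian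
    have : (B * (1 + A * B)⁻¹)ᴴ = (1 + B * A)⁻¹ * B := by
      rw [conjTranspose_mul, Matrix.conjTranspose_nonsing_inv]
      have hBh : Bᴴ = B := hB.1
      have hAh : Aᴴ = A := hA.1
      rw [hBh, conjTranspose_add, conjTranspose_one, conjTranspose_mul, hBh, hAh]
    rw [Matrix.IsHermitian, this, ← aux_comm A B h h']
  · intro x
    set y := (1 + A * B)⁻¹ *ᵥ x with hy
    have hx : x = (1 + A * B) *ᵥ y := by
      rw [hy, Matrix.mulVec_mulVec, Matrix.mul_nonsing_inv _ hAB, Matrix.one_mulVec]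
    have hMx : (B * (1 + A * B)⁻¹) *ᵥ x = B *ᵥ y := by
      rw [hy, ← Matrix.mulVec_mulVec]
    rw [hMx]
    have hsx : star x = x := rfl
    rw [hsx]
    nth_rewrite 1 [hx]
    rw [Matrix.add_mulVec, Matrix.one_mulVec, add_dotProduct]
    have h1 : 0 ≤ y ⬝ᵥ B *ᵥ y := by simpa using hB.2 y
    have h2 : (A * B) *ᵥ y ⬝ᵥ B *ᵥ y = (B *ᵥ y) ⬝ᵥ A *ᵥ (B *ᵥ y) := by
      rw [← Matrix.mulVec_mulVec, dotProduct_comm]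
    rw [h2]
    have h3 : 0 ≤ (B *ᵥ y) ⬝ᵥ A *ᵥ (B *ᵥ y) := by simpa using hA.2 (B *ᵥ y)
    linarith

lemma fromBlocks_psd {n : ℕ} (A D : Matrix (Fin n) (Fin n) ℝ)
    (hA : A.PosSemidef) (hD : D.PosSemidef) :
    (Matrix.fromBlocks A 0 0 D).PosSemidef := by
  rw [posSemidef_iff_dotProduct_mulVec] at hA hD ⊢
  constructor
  · rw [isHermitian_fromBlocks_iff]
    exact ⟨hA.1, by simp, by simp, hD.1⟩
  · intro x
    have := hA.2 (x ∘ Sum.inl)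
    have := hD.2 (x ∘ Sum.inr)
    simp only [fromBlocks_mulVec, Matrix.zero_mulVec, add_zero, zero_add] at *
    rw [show (star x : Fin n ⊕ Fin n → ℝ) = x from rfl] at *
    nth_rewrite 1 [← Sum.elim_comp_inl_inr x]
    rw [sumElim_dotProduct_sumElim]
    exact add_nonneg ‹0 ≤ star (x ∘ Sum.inl) ⬝ᵥ A *ᵥ x ∘ Sum.inl›
      ‹0 ≤ star (x ∘ Sum.inr) ⬝ᵥ D *ᵥ x ∘ Sum.inr›

/-- If `R₁`, `R₂` are symmetric positive semidefinite `n × n` matrices, `g₁`,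
`g₂` are `n × m` matrices, and `δ₁`, `δ₂` are symmetric positive semidefinite
`m × m` matrices with `I + δ₁δ₂` and `I + δ₂δ₁` invertible, then the block
diagonal matrix with blocks `R₁ + g₁δ₂(I+δ₁δ₂)⁻¹g₁ᵀ` and
`R₂ + g₂δ₁(I+δ₂δ₁)⁻¹g₂ᵀ` is symmetric and positive semidefinite. -/
theorem stmt_3 (n m : ℕ) (R₁ R₂ : Matrix (Fin n) (Fin n) ℝ)
    (hR₁ : R₁.PosSemidef) (hR₂ : R₂.PosSemidef)
    (g₁ g₂ : Matrix (Fin n) (Fin m) ℝ)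
    (δ₁ δ₂ : Matrix (Fin m) (Fin m) ℝ)
    (hδ₁ : δ₁.PosSemidef) (hδ₂ : δ₂.PosSemidef)
    (h₁₂ : IsUnit (1 + δ₁ * δ₂)) (h₂₁ : IsUnit (1 + δ₂ * δ₁)) :
    (Matrix.fromBlocks
        (R₁ + g₁ * (δ₂ * (1 + δ₁ * δ₂)⁻¹) * g₁ᵀ) 0
        0 (R₂ + g₂ * (δ₁ * (1 + δ₂ * δ₁)⁻¹) * g₂ᵀ)).PosSemidef := by
  have h1 := (aux_psd δ₁ δ₂ hδ₁ hδ₂ h₁₂ h₂₁).mul_mul_conjTranspose_same g₁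
  have h2 := (aux_psd δ₂ δ₁ hδ₂ hδ₁ h₂₁ h₁₂).mul_mul_conjTranspose_same g₂
  have e1 : g₁ᴴ = g₁ᵀ := rfl
  have e2 : g₂ᴴ = g₂ᵀ := rfl
  rw [e1] at h1; rw [e2] at h2
  exact fromBlocks_psd _ _ (hR₁.add h1) (hR₂.add h2)
end

section
/- Let p be a positive integer, θ > 0, R > 0 real numbers, N ∈ ℝᵖ a vector with all components Nⱼ > 0, and h ∈ ℝᵖ. Then the (p+1)×(p+1) real block matrix whose (1,1) entry is 1/θ, whose first row (resp. column) continues with −hᵀ/θ (resp. −h/θ), and whose lower-right p×p block is hhᵀ/θ − (R/(Σⱼ Nⱼ))·𝟙𝟙ᵀ + diag(R/N₁, …, R/N_p), is positive semidefinite (here 𝟙 denotes the all-ones vector in ℝᵖ). -/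
open Matrix

lemma cauchy_aux (p : ℕ) (N y : Fin p → ℝ) (hN : ∀ j, 0 < N j) :
    (∑ j, y j) ^ 2 ≤ (∑ j, N j) * ∑ j, y j ^ 2 / N j := by
  have key := Finset.sum_mul_sq_le_sq_mul_sq Finset.univ
      (fun j => Real.sqrt (N j)) (fun j => y j / Real.sqrt (N j))
  have h1 : ∀ j : Fin p, Real.sqrt (N j) * (y j / Real.sqrt (N j)) = y j := by
    intro j
    have hs : Real.sqrt (N j) ≠ 0 := ne_of_gt (Real.sqrt_pos.mpr (hN j))
    field_simp
  have h2 : ∀ j : Fin p, Real.sqrt (N j) ^ 2 = N j := fun j =>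
    Real.sq_sqrt (hN j).le
  have h3 : ∀ j : Fin p, (y j / Real.sqrt (N j)) ^ 2 = y j ^ 2 / N j := by
    intro j
    rw [div_pow, h2]
  simp only [h1, h2, h3] at key
  exact key

lemma quad_aux (p : ℕ) (θ R S : ℝ) (N h y : Fin p → ℝ) (a : ℝ) :
    a * (1 / θ * a + ∑ j, -h j / θ * y j) +
      ∑ i, y i * (-h i / θ * a +
        ∑ j, (h i * h j / θ - R / S + if i = j then R / N i else 0) * y j) =
    (a - ∑ j, h j * y j) ^ 2 / θ +
      R * ((∑ j, y j ^ 2 / N j) - (∑ j, y j) ^ 2 / S) := by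
  have inner : ∀ i : Fin p,
      (∑ j, (h i * h j / θ - R / S + if i = j then R / N i else 0) * y j) =
      (h i / θ) * (∑ j, h j * y j) - (R / S) * (∑ j, y j) + R / N i * y i := by
    intro i
    calc (∑ j, (h i * h j / θ - R / S + if i = j then R / N i else 0) * y j)
        = ∑ j, ((h i / θ) * (h j * y j) - (R / S) * y j +
            (if i = j then R / N i * y j else 0)) :=
          Finset.sum_congr rfl fun j _ => by split_ifs <;> ring
      _ = (h i / θ) * (∑ j, h j * y j) - (R / S) * (∑ j, y j)
            + R / N i * y i := by
          rw [Finset.sum_add_distrib, Finset.sum_sub_distrib, ← Finset.mul_sum,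
            ← Finset.mul_sum, Finset.sum_ite_eq, if_pos (Finset.mem_univ i)]
  have first : (∑ j, -h j / θ * y j) = (-(1 / θ)) * ∑ j, h j * y j := by
    rw [Finset.mul_sum]
    exact Finset.sum_congr rfl fun j _ => by ring
  have outer : (∑ i, y i * (-h i / θ * a +
        ∑ j, (h i * h j / θ - R / S + if i = j then R / N i else 0) * y j)) =
      (-(a / θ)) * (∑ j, h j * y j) + ((∑ j, h j * y j) / θ) * (∑ j, h j * y j)
        - (R * (∑ j, y j) / S) * (∑ j, y j) + R * (∑ j, y j ^ 2 / N j) := by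
    calc (∑ i, y i * (-h i / θ * a +
          ∑ j, (h i * h j / θ - R / S + if i = j then R / N i else 0) * y j))
        = ∑ i, ((-(a / θ)) * (h i * y i)
            + ((∑ j, h j * y j) / θ) * (h i * y i)
            - (R * (∑ j, y j) / S) * y i + R * (y i ^ 2 / N i)) :=
          Finset.sum_congr rfl fun i _ => by rw [inner i]; ring
      _ = _ := by
          rw [Finset.sum_add_distrib, Finset.sum_sub_distrib,
            Finset.sum_add_distrib, ← Finset.mul_sum, ← Finset.mul_sum,
            ← Finset.mul_sum, ← Finset.mul_sum]
  rw [first, outer]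
  ring

/-- The Hessian of the negative entropy of an ideal incompressible mixture is
positive semidefinite: with `θ > 0`, `R > 0`, `N ∈ ℝᵖ` componentwise positive
and `h ∈ ℝᵖ`, the `(p+1) × (p+1)` matrix with `(1,1)` entry `1/θ`, first
row/column continuing with `-hᵀ/θ` resp. `-h/θ`, and lower-right `p × p` block
`hhᵀ/θ - (R/∑ⱼNⱼ)·𝟙𝟙ᵀ + diag(R/Nⱼ)`, is positive semidefinite. -/
theorem stmt_4 (p : ℕ) (hp : 0 < p) (θ R : ℝ) (hθ : 0 < θ) (hR : 0 < R)
    (N h : Fin p → ℝ) (hN : ∀ j, 0 < N j) :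
    (Matrix.fromBlocks
        (Matrix.of fun (_ : Unit) (_ : Unit) => 1 / θ)
        (Matrix.of fun (_ : Unit) (j : Fin p) => -h j / θ)
        (Matrix.of fun (i : Fin p) (_ : Unit) => -h i / θ)
        (Matrix.of fun (i j : Fin p) =>
          h i * h j / θ - R / (∑ k, N k) +
            (if i = j then R / N i else 0))).PosSemidef := by
  have hne : Nonempty (Fin p) := Fin.pos_iff_nonempty.mp hp
  have hS : 0 < ∑ k, N k := Finset.sum_pos (fun k _ => hN k) Finset.univ_nonempty
  rw [posSemidef_iff_dotProduct_mulVec]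
  constructor
  · ext i j
    cases i <;> cases j <;>
      simp [conjTranspose, fromBlocks, transpose, mul_comm, eq_comm]
    split <;> simp_all
  · intro x
    simp only [dotProduct, mulVec, Fintype.sum_sum_type, star, Pi.star_apply,
      star_trivial, fromBlocks_apply₁₁, fromBlocks_apply₁₂, fromBlocks_apply₂₁,
      fromBlocks_apply₂₂, Matrix.of_apply, Finset.univ_unique,
      Finset.sum_singleton, id_eq]
    have key := quad_aux p θ R (∑ k, N k) N h (fun j => x (Sum.inr j))
      (x (Sum.inl default))
    rw [key]
    have hc := cauchy_aux p N (fun j => x (Sum.inr j)) hN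
    have h1 : 0 ≤ (∑ j, x (Sum.inr j) ^ 2 / N j)
        - (∑ j, x (Sum.inr j)) ^ 2 / (∑ k, N k) := by
      rw [sub_nonneg, div_le_iff₀ hS]
      linarith [hc]
    positivity
end
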